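/- Let a : Fin n → ℝ and let σ : Equiv.Perm (Fin n) be a cycle (Equiv.Perm.IsCycle σ). Then there exists a list l of permutations of Fin n such that: the elements of l are pairwise disjoint (Equiv.Perm.Disjoint), every element of l is a cycle, a is injective on the support of every element of l, and the permuted tuples coincide: a ∘ σ = a ∘ (l.prod). -/

import Mathlib

private lemma aux_toList_prod {M : Type*} [Monoid M] [DecidableEq M] (s : Finset M)
    (comm : (s : Set M).Pairwise (Function.onFun Commute id)) :
    s.toList.prod = s.noncommProd id comm := by
  have hc : (↑s.toList.toFinset : Set M).Pairwise (Function.onFun Commute (id : M → M)) := by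
    simpa using comm
  have h2 : s.toList.toFinset.noncommProd id hc = (List.map id s.toList).prod :=
    Finset.noncommProd_toFinset (s.toList) id hc s.nodup_toList
  have h3 := Finset.noncommProd_congr (f := (id : M → M)) (g := id)
    (Finset.toList_toFinset s) (fun x _ => rfl) hc
  simp only [List.map_id] at h2
  rw [← h2, h3]

private lemma aux_support_prod_subset {n : ℕ} :
    ∀ (l : List (Equiv.Perm (Fin n))) (s : Finset (Fin n)),
      (∀ τ ∈ l, τ.support ⊆ s) → l.prod.support ⊆ s := by
  intro l
  induction l with
  | nil => intro s _; simp
  | cons c rest ih =>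
    intro s h
    rw [List.prod_cons]
    refine (Equiv.Perm.support_mul_le c rest.prod).trans ?_
    exact sup_le (h c (by simp)) (ih s (fun τ hτ => h τ (by simp [hτ])))

private lemma aux_comp2 {n : ℕ} (a : Fin n → ℝ) (p q p' q' : Equiv.Perm (Fin n))
    (hp' : p'.support ⊆ p.support)
    (hpq : Disjoint p.support q.support)
    (hpq' : Disjoint p.support q'.support)
    (hp : a ∘ p = a ∘ p') (hq : a ∘ q = a ∘ q') :
    a ∘ (p * q) = a ∘ (p' * q') := by
  funext x
  simp only [Function.comp_apply, Equiv.Perm.mul_apply]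
  have hpfun : ∀ y, a (p y) = a (p' y) := fun y => congrFun hp y
  have hqfun : ∀ y, a (q y) = a (q' y) := fun y => congrFun hq y
  by_cases hqx : q x = x
  · by_cases hq'x : q' x = x
    · rw [hqx, hq'x]; exact hpfun x
    · -- x ∈ supp q', so x ∉ supp p; q' x ∈ supp q' so p' (q' x) = q' x
      have hx : x ∈ q'.support := Equiv.Perm.mem_support.mpr hq'x
      have hxp : x ∉ p.support := Finset.disjoint_right.mp hpq' hx
      have h1 : q' x ∈ q'.support := Equiv.Perm.apply_mem_support.mpr hx
      have h2 : q' x ∉ p'.support := fun h => Finset.disjoint_right.mp hpq' h1 (hp' h)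
      rw [Equiv.Perm.notMem_support.mp h2, hqx, Equiv.Perm.notMem_support.mp hxp,
        ← hqfun x, hqx]
  · have hx : x ∈ q.support := Equiv.Perm.mem_support.mpr hqx
    have hxp : x ∉ p.support := Finset.disjoint_right.mp hpq hx
    have h1 : q x ∈ q.support := Equiv.Perm.apply_mem_support.mpr hx
    have h2 : q x ∉ p.support := Finset.disjoint_right.mp hpq h1
    rw [Equiv.Perm.notMem_support.mp h2]
    by_cases hq'x : q' x = x
    · rw [hq'x, Equiv.Perm.notMem_support.mp (fun h => hxp (hp' h) : x ∉ p'.support)]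
      rw [hqfun x, hq'x]
    · have hx' : q' x ∈ q'.support :=
        Equiv.Perm.apply_mem_support.mpr (Equiv.Perm.mem_support.mpr hq'x)
      have h3 : q' x ∉ p'.support := fun h => Finset.disjoint_right.mp hpq' hx' (hp' h)
      rw [Equiv.Perm.notMem_support.mp h3]
      exact hqfun x

private lemma aux_combine {n : ℕ} (a : Fin n → ℝ) :
    ∀ (cs : List (Equiv.Perm (Fin n))), cs.Pairwise Equiv.Perm.Disjoint →
      (∀ c ∈ cs, ∃ l : List (Equiv.Perm (Fin n)),
        l.Pairwise Equiv.Perm.Disjoint ∧ (∀ τ ∈ l, τ.IsCycle) ∧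
        (∀ τ ∈ l, Set.InjOn a (τ.support : Set (Fin n))) ∧
        (∀ τ ∈ l, τ.support ⊆ c.support) ∧ a ∘ c = a ∘ l.prod) →
      ∃ L : List (Equiv.Perm (Fin n)),
        L.Pairwise Equiv.Perm.Disjoint ∧ (∀ τ ∈ L, τ.IsCycle) ∧
        (∀ τ ∈ L, Set.InjOn a (τ.support : Set (Fin n))) ∧
        (∀ τ ∈ L, ∃ c ∈ cs, τ.support ⊆ c.support) ∧ a ∘ cs.prod = a ∘ L.prod := by
  intro cs
  induction cs with
  | nil => intro _ _; exact ⟨[], by simp, by simp, by simp, by simp, by simp⟩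
  | cons c rest ih =>
    intro hpw hex
    obtain ⟨hhd, hrest⟩ := List.pairwise_cons.mp hpw
    obtain ⟨l, hl1, hl2, hl3, hl4, hl5⟩ := hex c (by simp)
    obtain ⟨L, hL1, hL2, hL3, hL4, hL5⟩ := ih hrest (fun d hd => hex d (by simp [hd]))
    -- supports
    have hlsub : l.prod.support ⊆ c.support := aux_support_prod_subset l c.support hl4
    have hcd : ∀ τ ∈ L, Disjoint c.support τ.support := by
      intro τ hτ
      obtain ⟨d, hd, hsub⟩ := hL4 τ hτ
      exact Finset.disjoint_of_subset_right hsub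
        (Equiv.Perm.disjoint_iff_disjoint_support.mp (hhd d hd))
    have hcrest : Disjoint c.support rest.prod.support :=
      Equiv.Perm.disjoint_iff_disjoint_support.mp
        (Equiv.Perm.disjoint_prod_right rest hhd)
    have hcL : Disjoint c.support L.prod.support :=
      Equiv.Perm.disjoint_iff_disjoint_support.mp
        (Equiv.Perm.disjoint_prod_right L (fun τ hτ =>
          Equiv.Perm.disjoint_iff_disjoint_support.mpr (hcd τ hτ)))
    refine ⟨l ++ L, ?_, ?_, ?_, ?_, ?_⟩
    · rw [List.pairwise_append]
      refine ⟨hl1, hL1, fun τ₁ h₁ τ₂ h₂ => ?_⟩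
      refine Equiv.Perm.disjoint_iff_disjoint_support.mpr ?_
      exact Finset.disjoint_of_subset_left (hl4 τ₁ h₁) (hcd τ₂ h₂)
    · intro τ hτ; rcases List.mem_append.mp hτ with h | h
      exacts [hl2 τ h, hL2 τ h]
    · intro τ hτ; rcases List.mem_append.mp hτ with h | h
      exacts [hl3 τ h, hL3 τ h]
    · intro τ hτ; rcases List.mem_append.mp hτ with h | h
      · exact ⟨c, by simp, hl4 τ h⟩
      · obtain ⟨d, hd, hsub⟩ := hL4 τ h; exact ⟨d, by simp [hd], hsub⟩
    · rw [List.prod_cons, List.prod_append]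
      exact aux_comp2 a c rest.prod l.prod L.prod hlsub hcrest hcL hl5 hL5

private lemma aux_card {n : ℕ} {σ : Equiv.Perm (Fin n)} (hσ : σ.IsCycle) {i j : Fin n}
    (hij : i ≠ j) (hi : i ∈ σ.support) (hj : j ∈ σ.support) :
    ∀ c ∈ (Equiv.swap i j * σ).cycleFactorsFinset, c.support.card < σ.support.card := by
  set σ' := Equiv.swap i j * σ with hσ'def
  have h2 : σ'.support ⊆ σ.support := by
    intro x hx
    by_contra h
    have hσx : σ x = x := Equiv.Perm.notMem_support.mp h
    apply Equiv.Perm.mem_support.mp hx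
    have hxi : x ≠ i := fun e => h (e ▸ hi)
    have hxj : x ≠ j := fun e => h (e ▸ hj)
    simp [hσ'def, Equiv.Perm.mul_apply, hσx, Equiv.swap_apply_of_ne_of_ne hxi hxj]
  intro c hc
  have h1 : c.support ⊆ σ'.support := Equiv.Perm.mem_cycleFactorsFinset_support_le hc
  by_contra hlt
  push_neg at hlt
  have hceq : c.support = σ.support :=
    Finset.eq_of_subset_of_card_le (h1.trans h2) hlt
  have h3 : σ'.support = σ.support :=
    Finset.Subset.antisymm h2 (hceq ▸ h1)
  obtain ⟨hcyc, happ⟩ := Equiv.Perm.mem_cycleFactorsFinset_iff.mp hc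
  have hcs : c = σ' := by
    refine Equiv.ext fun x => ?_
    by_cases hx : x ∈ c.support
    · exact happ x hx
    · rw [Equiv.Perm.notMem_support.mp hx,
        Equiv.Perm.notMem_support.mp (show x ∉ σ'.support from fun h => hx ((hceq.trans h3.symm) ▸ h))]
  have hcyc' : σ'.IsCycle := hcs ▸ hcyc
  have e1 : Equiv.Perm.sign σ' = -Equiv.Perm.sign σ := by
    rw [hσ'def, map_mul, Equiv.Perm.sign_swap hij, neg_one_mul]
  have e2 : Equiv.Perm.sign σ' = Equiv.Perm.sign σ := by
    rw [hcyc'.sign, hσ.sign, h3]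
  have : Equiv.Perm.sign σ = -Equiv.Perm.sign σ := e2.symm.trans e1
  rcases Int.units_eq_one_or (Equiv.Perm.sign σ) with h | h <;> rw [h] at this <;>
    exact absurd this (by decide)

private lemma aux_main {n : ℕ} (a : Fin n → ℝ) :
    ∀ (k : ℕ) (σ : Equiv.Perm (Fin n)), σ.IsCycle → σ.support.card ≤ k →
      ∃ l : List (Equiv.Perm (Fin n)),
        l.Pairwise Equiv.Perm.Disjoint ∧ (∀ τ ∈ l, τ.IsCycle) ∧
        (∀ τ ∈ l, Set.InjOn a (τ.support : Set (Fin n))) ∧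
        (∀ τ ∈ l, τ.support ⊆ σ.support) ∧ a ∘ σ = a ∘ l.prod := by
  intro k
  induction k with
  | zero =>
    intro σ hσ hk
    exfalso
    have : σ = 1 := Equiv.Perm.card_support_eq_zero.mp (Nat.le_zero.mp hk)
    exact hσ.ne_one this
  | succ k IH =>
    intro σ hσ hk
    by_cases hinj : Set.InjOn a (σ.support : Set (Fin n))
    · exact ⟨[σ], by simp, by simpa using hσ, by simpa using hinj, by simp, by simp⟩
    · simp only [Set.InjOn, not_forall] at hinj
      obtain ⟨i, hi, j, hj, haij, hij⟩ := hinj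
      have hi' : i ∈ σ.support := hi
      have hj' : j ∈ σ.support := hj
      set σ' := Equiv.swap i j * σ with hσ'def
      have hcomp : a ∘ σ = a ∘ σ' := by
        funext x
        simp only [Function.comp_apply, hσ'def, Equiv.Perm.mul_apply]
        rcases eq_or_ne (σ x) i with h | h
        · rw [h, Equiv.swap_apply_left]; exact haij
        rcases eq_or_ne (σ x) j with h2 | h2
        · rw [h2, Equiv.swap_apply_right]; exact haij.symm
        · rw [Equiv.swap_apply_of_ne_of_ne h h2]
      have hcard := aux_card hσ hij hi' hj'
      have hsupp' : σ'.support ⊆ σ.support := by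
        intro x hx
        by_contra h
        have hσx : σ x = x := Equiv.Perm.notMem_support.mp h
        apply Equiv.Perm.mem_support.mp hx
        have hxi : x ≠ i := fun e => h (e ▸ hi')
        have hxj : x ≠ j := fun e => h (e ▸ hj')
        simp [hσ'def, Equiv.Perm.mul_apply, hσx, Equiv.swap_apply_of_ne_of_ne hxi hxj]
      -- the list of cycle factors of σ'
      set cs := σ'.cycleFactorsFinset.toList with hcs
      have hmem : ∀ c, c ∈ cs ↔ c ∈ σ'.cycleFactorsFinset := fun c => Finset.mem_toList
      have hpw : cs.Pairwise Equiv.Perm.Disjoint := by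
        refine List.Pairwise.imp_of_mem ?_ σ'.cycleFactorsFinset.nodup_toList
        intro c d hc hd hne
        exact Equiv.Perm.cycleFactorsFinset_pairwise_disjoint σ'
          ((hmem c).mp hc) ((hmem d).mp hd) hne
      have hprod : cs.prod = σ' := by
        rw [hcs, aux_toList_prod _ (Equiv.Perm.cycleFactorsFinset_mem_commute σ')]
        exact Equiv.Perm.cycleFactorsFinset_noncommProd σ'
      have hex : ∀ c ∈ cs, ∃ l : List (Equiv.Perm (Fin n)),
          l.Pairwise Equiv.Perm.Disjoint ∧ (∀ τ ∈ l, τ.IsCycle) ∧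
          (∀ τ ∈ l, Set.InjOn a (τ.support : Set (Fin n))) ∧
          (∀ τ ∈ l, τ.support ⊆ c.support) ∧ a ∘ c = a ∘ l.prod := by
        intro c hc
        have hc' := (hmem c).mp hc
        have hcyc : c.IsCycle := (Equiv.Perm.mem_cycleFactorsFinset_iff.mp hc').1
        have : c.support.card ≤ k := by
          have := hcard c hc'
          omega
        exact IH c hcyc this
      obtain ⟨L, hL1, hL2, hL3, hL4, hL5⟩ := aux_combine a cs hpw hex
      refine ⟨L, hL1, hL2, hL3, ?_, ?_⟩
      · intro τ hτ
        obtain ⟨c, hc, hsub⟩ := hL4 τ hτ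
        exact hsub.trans ((Equiv.Perm.mem_cycleFactorsFinset_support_le
          ((hmem c).mp hc)).trans hsupp')
      · rw [hcomp, ← hprod]; exact hL5

/-- Every cyclic permutation of a tuple `a` acts on `a` like a product of
pairwise disjoint cycles, each of which moves only positions carrying distinct values of `a`. -/
theorem stmt_12 (n : ℕ) (a : Fin n → ℝ) (σ : Equiv.Perm (Fin n))
    (hσ : σ.IsCycle) :
    ∃ l : List (Equiv.Perm (Fin n)),
      l.Pairwise Equiv.Perm.Disjoint ∧
      (∀ τ ∈ l, τ.IsCycle) ∧
      (∀ τ ∈ l, Set.InjOn a (τ.support : Set (Fin n))) ∧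
      a ∘ σ = a ∘ l.prod := by
  obtain ⟨l, h1, h2, h3, _, h5⟩ := aux_main a σ.support.card σ hσ le_rfl
  exact ⟨l, h1, h2, h3, h5⟩
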